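/- If the transfer function of a strictly p-passive SISO system with rate λ satisfies Re{G(jω−λ)} > 0 for all ω, and the relative degree of G is Δ = n − q (poles minus zeros), then Δ ≤ 2p + 1. In particular, for p = 0 (passivity), the relative degree is at most 1. -/

import Mathlib

open Filter Real

namespace RelDegAux


lemma cos_nonneg_interval {α β : ℝ} (hab : α ≤ β)
    (h : ∀ x ∈ Set.Icc α β, 0 ≤ Real.cos x) : β - α ≤ π := by
  by_contra hlt
  push_neg at hlt
  have key : ∀ x, α ≤ x → x ≤ β - π → Real.cos x = 0 := by
    intro x hx1 hx2
    have h1 : 0 ≤ Real.cos x := h x ⟨hx1, by linarith [Real.pi_pos]⟩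
    have h2 : 0 ≤ Real.cos (x + π) := h (x + π) ⟨by linarith [Real.pi_pos], by linarith⟩
    rw [Real.cos_add_pi] at h2
    linarith
  have hπ3 : (1:ℝ) < π := by linarith [Real.pi_gt_three]
  set x₂ := α + min 1 (β - π - α) with hx₂
  have hmin : 0 < min 1 (β - π - α) := lt_min one_pos (by linarith)
  have c1 : Real.cos α = 0 := key α le_rfl (by linarith)
  have c2 : Real.cos x₂ = 0 := key x₂ (by simp [hx₂]; linarith) (by
    have := min_le_right 1 (β - π - α); simp [hx₂]; linarith)
  obtain ⟨k₁, hk₁⟩ := Real.cos_eq_zero_iff.1 c1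
  obtain ⟨k₂, hk₂⟩ := Real.cos_eq_zero_iff.1 c2
  have hdiff : x₂ - α = (k₂ - k₁ : ℤ) * π := by
    rw [hk₁, hk₂]; push_cast; ring
  have h1 : 0 < ((k₂ - k₁ : ℤ) : ℝ) * π := by
    rw [← hdiff]; linarith
  have h2 : ((k₂ - k₁ : ℤ) : ℝ) * π < π := by
    rw [← hdiff]
    have := min_le_left 1 (β - π - α)
    simp only [hx₂]; linarith
  have hπ := Real.pi_pos
  have k1' : (0:ℤ) < k₂ - k₁ := by
    by_contra hk
    push_neg at hk
    have : ((k₂ - k₁ : ℤ) : ℝ) ≤ 0 := by exact_mod_cast Int.cast_nonpos.2 hk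
    nlinarith
  have k2' : (k₂ - k₁ : ℤ) < 1 := by
    by_contra hk
    push_neg at hk
    have : (1:ℝ) ≤ ((k₂ - k₁ : ℤ) : ℝ) := by exact_mod_cast hk
    nlinarith
  omega

lemma trap_nonneg {ψ : ℝ → ℝ} (hψ : Continuous ψ) {a b : ℝ} (hab : a ≤ b)
    (h : ∀ t, a < t → t < b → 0 ≤ Real.cos (ψ t)) : ψ a - ψ b ≤ π := by
  rcases eq_or_lt_of_le hab with rfl | hab'
  · linarith [Real.pi_pos]
  have hIcc : ∀ t ∈ Set.Icc a b, 0 ≤ Real.cos (ψ t) := by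
    have hC : IsClosed {t : ℝ | 0 ≤ Real.cos (ψ t)} :=
      isClosed_le continuous_const (Real.continuous_cos.comp hψ)
    have hsub : Set.Ioo a b ⊆ {t : ℝ | 0 ≤ Real.cos (ψ t)} := fun t ht => h t ht.1 ht.2
    intro t ht
    have : Set.Icc a b ⊆ {t : ℝ | 0 ≤ Real.cos (ψ t)} := by
      rw [← closure_Ioo hab'.ne]
      exact hC.closure_subset_iff.2 hsub
    exact this ht
  have himg : Set.uIcc (ψ a) (ψ b) ⊆ ψ '' Set.uIcc a b :=
    intermediate_value_uIcc hψ.continuousOn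
  have hcosu : ∀ x ∈ Set.Icc (min (ψ a) (ψ b)) (max (ψ a) (ψ b)), 0 ≤ Real.cos x := by
    intro x hx
    have hx' : x ∈ Set.uIcc (ψ a) (ψ b) := hx
    obtain ⟨t, ht, rfl⟩ := himg hx'
    rw [Set.uIcc_of_le hab] at ht
    exact hIcc t ht
  have := cos_nonneg_interval (min_le_max) hcosu
  have h1 : ψ a ≤ max (ψ a) (ψ b) := le_max_left _ _
  have h2 : min (ψ a) (ψ b) ≤ ψ b := min_le_right _ _
  linarith

lemma trap_nonpos {ψ : ℝ → ℝ} (hψ : Continuous ψ) {a b : ℝ} (hab : a ≤ b)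
    (h : ∀ t, a < t → t < b → Real.cos (ψ t) ≤ 0) : ψ a - ψ b ≤ π := by
  have := trap_nonneg (ψ := fun t => ψ t + π) (by fun_prop) hab (by
    intro t h1 h2
    rw [Real.cos_add_pi]
    linarith [h t h1 h2])
  simpa using this

lemma chain : ∀ (l : List ℝ) (s : ℝ), (s :: l).Pairwise (fun x y => y ≤ x) →
    ∀ (ψ : ℝ → ℝ), Continuous ψ → ∀ L : ℝ, Tendsto ψ atBot (nhds L) →
    (∀ t, t ≤ s → 0 ≤ (((s :: l).map (fun x => t - x)).prod) * Real.cos (ψ t)) →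
    L - ψ s ≤ (l.length + 1) * π := by
  intro l
  induction l with
  | nil =>
    intro s _ ψ hψ L hL hsign
    have step1 : ∀ t, t ≤ s → ψ t - ψ s ≤ π := by
      intro t ht
      refine trap_nonpos hψ ht ?_
      intro t' h1 h2
      have := hsign t' h2.le
      simp only [List.map_cons, List.map_nil, List.prod_cons, List.prod_nil, mul_one] at this
      nlinarith
    have step2 : L ≤ ψ s + π := by
      refine le_of_tendsto hL ?_
      filter_upwards [eventually_le_atBot s] with t ht
      linarith [step1 t ht]
    simp only [List.length_nil]
    push_cast
    linarith
  | cons s' l'' ih =>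
    intro s hsort ψ hψ L hL hsign
    rw [List.pairwise_cons] at hsort
    obtain ⟨hall, hsort'⟩ := hsort
    have hs's : s' ≤ s := hall s' (by simp)
    have hl''le : ∀ x ∈ l'', x ≤ s' := by
      rw [List.pairwise_cons] at hsort'
      exact hsort'.1
    -- (i)
    have hi : ψ s' - ψ s ≤ π := by
      refine trap_nonpos hψ hs's ?_
      intro t h1 h2
      have hsg := hsign t h2.le
      simp only [List.map_cons, List.prod_cons] at hsg
      have hpos : 0 < (t - s') * (l''.map (fun x => t - x)).prod := by
        apply mul_pos (by linarith)
        apply List.prod_pos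
        intro a ha
        simp only [List.mem_map] at ha
        obtain ⟨x, hx, rfl⟩ := ha
        have := hl''le x hx
        linarith
      by_contra hc
      push_neg at hc
      have h3 : 0 < (t - s') * (List.map (fun x => t - x) l'').prod * Real.cos (ψ t) :=
        mul_pos hpos hc
      nlinarith
    -- (ii) recurse
    have hsign' : ∀ t ≤ s', 0 ≤ (List.map (fun x => t - x) (s' :: l'')).prod * Real.cos (ψ t + π) := by
      intro t ht
      rcases eq_or_lt_of_le ht with heq | ht'
      · have : ((s' :: l'').map (fun x => t - x)).prod = 0 := by
          apply List.prod_eq_zero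
          simp [heq]
        rw [this, zero_mul]
      · have hsg := hsign t (le_trans ht hs's)
        simp only [List.map_cons, List.prod_cons] at hsg ⊢
        rw [Real.cos_add_pi]
        have hts : t - s < 0 := by linarith
        set Q := (t - s') * (l''.map (fun x => t - x)).prod with hQ
        have hQcos : Q * Real.cos (ψ t) ≤ 0 := by nlinarith
        nlinarith
    have hii := ih s' hsort' (fun t => ψ t + π) (by fun_prop) (L + π)
      (hL.add_const π) hsign'
    have : L - ψ s' ≤ ((l''.length : ℝ) + 1) * π := by simpa using hii
    rw [List.length_cons]
    push_cast
    nlinarith [Real.pi_pos]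

lemma top_bound {ψ : ℝ → ℝ} (hψ : Continuous ψ) {s L : ℝ}
    (hL : Tendsto ψ atTop (nhds L)) (h : ∀ t, s < t → 0 ≤ Real.cos (ψ t)) :
    ψ s - L ≤ π := by
  have step1 : ∀ t, s ≤ t → ψ s - ψ t ≤ π := by
    intro t ht
    exact trap_nonneg hψ ht (fun t' h1 h2 => h t' h1)
  have : ψ s - π ≤ L := by
    refine ge_of_tendsto hL ?_
    filter_upwards [eventually_ge_atTop s] with t ht
    linarith [step1 t ht]
  linarith

lemma empty_bound {ψ : ℝ → ℝ} (hψ : Continuous ψ) {L₁ L₂ : ℝ}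
    (hL₁ : Tendsto ψ atBot (nhds L₁)) (hL₂ : Tendsto ψ atTop (nhds L₂))
    (h : ∀ t, 0 ≤ Real.cos (ψ t)) : L₁ - L₂ ≤ π := by
  have step1 : ∀ t₂, L₁ - ψ t₂ ≤ π := by
    intro t₂
    have : L₁ ≤ ψ t₂ + π := by
      refine le_of_tendsto hL₁ ?_
      filter_upwards [eventually_le_atBot t₂] with t ht
      linarith [trap_nonneg hψ ht (fun t' _ _ => h t')]
    linarith
  have : L₁ - π ≤ L₂ := by
    refine ge_of_tendsto hL₂ ?_
    filter_upwards with t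
    linarith [step1 t]
  linarith


noncomputable def lift1 (x c t : ℝ) : ℝ :=
  (if 0 < x then 0 else π) + Real.arctan ((t + c)/x)

lemma lift1_cont (x c : ℝ) : Continuous (lift1 x c) := by
  unfold lift1
  exact continuous_const.add (Real.continuous_arctan.comp (by continuity))

lemma sqrt_aux {x y : ℝ} (hx : x ≠ 0) :
    Real.sqrt (1 + (y/x)^2) = Real.sqrt (x^2 + y^2) / |x| := by
  have h1 : 1 + (y/x)^2 = (x^2 + y^2) / x^2 := by field_simp
  rw [h1, Real.sqrt_div (by positivity), Real.sqrt_sq_eq_abs]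

lemma sqrt_pos_aux {x : ℝ} (hx : x ≠ 0) (y : ℝ) : 0 < Real.sqrt (x^2 + y^2) :=
  Real.sqrt_pos.2 (by positivity)

lemma cos_lift1 {x : ℝ} (hx : x ≠ 0) (c t : ℝ) :
    Real.cos (lift1 x c t) = x / Real.sqrt (x^2 + (t+c)^2) := by
  set y := t + c
  have hs := sqrt_pos_aux hx y
  unfold lift1
  rcases lt_or_gt_of_ne hx with hneg | hpos
  · rw [if_neg (by linarith), add_comm π, Real.cos_add_pi, Real.cos_arctan, sqrt_aux hx,
      abs_of_neg hneg]
    field_simp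
    rfl
  · rw [if_pos hpos, zero_add, Real.cos_arctan, sqrt_aux hx, abs_of_pos hpos]
    field_simp
    rfl

lemma sin_lift1 {x : ℝ} (hx : x ≠ 0) (c t : ℝ) :
    Real.sin (lift1 x c t) = (t+c) / Real.sqrt (x^2 + (t+c)^2) := by
  set y := t + c
  have hs := sqrt_pos_aux hx y
  unfold lift1
  rcases lt_or_gt_of_ne hx with hneg | hpos
  · rw [if_neg (by linarith), add_comm π, Real.sin_add_pi, Real.sin_arctan, sqrt_aux hx,
      abs_of_neg hneg]
    field_simp
    ring
  · rw [if_pos hpos, zero_add, Real.sin_arctan, sqrt_aux hx, abs_of_pos hpos]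
    field_simp
    exact mul_comm _ _

lemma polar1 {x : ℝ} (hx : x ≠ 0) (c t : ℝ) :
    ((x:ℂ) + (t + c)*Complex.I)
      = (Real.sqrt (x^2 + (t+c)^2) : ℂ) * Complex.exp ((lift1 x c t : ℝ) * Complex.I) := by
  have hs := sqrt_pos_aux hx (t+c)
  have hs' : Real.sqrt (x^2 + (t+c)^2) ≠ 0 := ne_of_gt hs
  rw [Complex.exp_mul_I, ← Complex.ofReal_cos, ← Complex.ofReal_sin,
    cos_lift1 hx, sin_lift1 hx]
  rw [Complex.ofReal_div, Complex.ofReal_div]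
  have hsC : ((Real.sqrt (x^2 + (t+c)^2) : ℝ) : ℂ) ≠ 0 := by
    exact_mod_cast Complex.ofReal_ne_zero.2 hs'
  field_simp
  push_cast
  ring

lemma affine_tendsto_atTop {x : ℝ} (hx : 0 < x) (c : ℝ) :
    Tendsto (fun t : ℝ => (t + c)/x) atTop atTop :=
  (tendsto_atTop_add_const_right atTop c tendsto_id).atTop_div_const hx

lemma affine_tendsto_atBot {x : ℝ} (hx : 0 < x) (c : ℝ) :
    Tendsto (fun t : ℝ => (t + c)/x) atBot atBot :=
  (tendsto_atBot_add_const_right atBot c tendsto_id).atBot_div_const hx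

lemma affine_tendsto_atTop' {x : ℝ} (hx : x < 0) (c : ℝ) :
    Tendsto (fun t : ℝ => (t + c)/x) atTop atBot := by
  have h : ∀ t : ℝ, (t + c)/x = -((t + c)/(-x)) := by intro t; ring
  simp only [h]
  exact tendsto_neg_atTop_atBot.comp (affine_tendsto_atTop (by linarith) c)

lemma affine_tendsto_atBot' {x : ℝ} (hx : x < 0) (c : ℝ) :
    Tendsto (fun t : ℝ => (t + c)/x) atBot atTop := by
  have h : ∀ t : ℝ, (t + c)/x = -((t + c)/(-x)) := by intro t; ring
  simp only [h]
  exact tendsto_neg_atBot_atTop.comp (affine_tendsto_atBot (by linarith) c)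

lemma arctan_comp_atTop {f : ℝ → ℝ} {l : Filter ℝ} (hf : Tendsto f l atTop) :
    Tendsto (fun t => Real.arctan (f t)) l (nhds (π/2)) :=
  (Real.tendsto_arctan_atTop.mono_right nhdsWithin_le_nhds).comp hf

lemma arctan_comp_atBot {f : ℝ → ℝ} {l : Filter ℝ} (hf : Tendsto f l atBot) :
    Tendsto (fun t => Real.arctan (f t)) l (nhds (-(π/2))) :=
  (Real.tendsto_arctan_atBot.mono_right nhdsWithin_le_nhds).comp hf

lemma lift1_tendsto_atTop {x : ℝ} (hx : x ≠ 0) (c : ℝ) :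
    Tendsto (lift1 x c) atTop (nhds (π/2)) := by
  rcases lt_or_gt_of_ne hx with hneg | hpos
  · have h := (arctan_comp_atBot (affine_tendsto_atTop' hneg c)).const_add π
    unfold lift1
    simp only [if_neg (by linarith : ¬ 0 < x)]
    have heq : π + -(π/2) = π/2 := by ring
    rw [← heq]
    exact h
  · have h := (arctan_comp_atTop (affine_tendsto_atTop hpos c)).const_add (0:ℝ)
    unfold lift1
    simp only [if_pos hpos]
    simpa using h

lemma lift1_tendsto_atBot {x : ℝ} (hx : x ≠ 0) (c : ℝ) :
    Tendsto (lift1 x c) atBot (nhds (if 0 < x then -(π/2) else π + π/2)) := by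
  rcases lt_or_gt_of_ne hx with hneg | hpos
  · have h := (arctan_comp_atTop (affine_tendsto_atBot' hneg c)).const_add π
    unfold lift1
    simp only [if_neg (by linarith : ¬ 0 < x)]
    exact h
  · have h := (arctan_comp_atBot (affine_tendsto_atBot hpos c)).const_add (0:ℝ)
    unfold lift1
    simp only [if_pos hpos]
    simpa using h

noncomputable def fac (p : ℝ × ℝ × Bool) (t : ℝ) : ℂ :=
  if p.2.2 then ((p.1:ℂ) + (t + p.2.1)*Complex.I)
  else (starRingEnd ℂ) ((p.1:ℂ) + (t + p.2.1)*Complex.I)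

noncomputable def ang (p : ℝ × ℝ × Bool) (t : ℝ) : ℝ :=
  if p.2.2 then lift1 p.1 p.2.1 t else -(lift1 p.1 p.2.1 t)

noncomputable def rad (p : ℝ × ℝ × Bool) (t : ℝ) : ℝ :=
  Real.sqrt (p.1^2 + (t + p.2.1)^2)

lemma fac_polar {p : ℝ × ℝ × Bool} (hx : p.1 ≠ 0) (t : ℝ) :
    fac p t = (rad p t : ℂ) * Complex.exp ((ang p t : ℝ) * Complex.I) := by
  unfold fac ang rad
  rcases p with ⟨x, c, b⟩
  cases b
  · simp only [if_neg, Bool.false_eq_true, if_false]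
    rw [polar1 hx c t]
    rw [map_mul]
    congr 1
    · exact Complex.conj_ofReal _
    · rw [← Complex.exp_conj]
      congr 1
      simp [Complex.conj_I]
  · simp only [if_pos rfl]
    exact polar1 hx c t

lemma prod_polar (M : Multiset (ℝ × ℝ × Bool)) (h : ∀ p ∈ M, p.1 ≠ 0) (t : ℝ) :
    (M.map (fun p => fac p t)).prod
      = ((M.map (fun p => rad p t)).prod : ℝ) * Complex.exp (((M.map (fun p => ang p t)).sum : ℝ) * Complex.I) := by
  induction M using Multiset.induction_on with
  | empty => simp
  | cons a M ih =>
    have ha : a.1 ≠ 0 := h a (Multiset.mem_cons_self a M)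
    have hM : ∀ p ∈ M, p.1 ≠ 0 := fun p hp => h p (Multiset.mem_cons_of_mem hp)
    simp only [Multiset.map_cons, Multiset.prod_cons, Multiset.sum_cons]
    rw [ih hM, fac_polar ha t]
    push_cast
    rw [add_mul, Complex.exp_add]
    ring

lemma cont_angsum (M : Multiset (ℝ × ℝ × Bool)) :
    Continuous (fun t => (M.map (fun p => ang p t)).sum) := by
  induction M using Multiset.induction_on with
  | empty => simpa using continuous_const
  | cons a M ih =>
    simp only [Multiset.map_cons, Multiset.sum_cons]
    apply Continuous.add ?_ ih
    unfold ang
    rcases a with ⟨x, c, b⟩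
    cases b
    · simp; exact (lift1_cont x c).neg
    · simpa using lift1_cont x c

lemma tendsto_angsum (M : Multiset (ℝ × ℝ × Bool)) (l : Filter ℝ)
    (lim : (ℝ × ℝ × Bool) → ℝ) (h : ∀ p ∈ M, Tendsto (ang p) l (nhds (lim p))) :
    Tendsto (fun t => (M.map (fun p => ang p t)).sum) l (nhds ((M.map lim).sum)) := by
  induction M using Multiset.induction_on with
  | empty => simpa using tendsto_const_nhds
  | cons a M ih =>
    simp only [Multiset.map_cons, Multiset.sum_cons]
    exact (h a (Multiset.mem_cons_self a M)).add (ih (fun p hp => h p (Multiset.mem_cons_of_mem hp)))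

lemma sum_ite_count (M : Multiset ℂ) (c : ℂ → Prop) [DecidablePred c] (v w : ℝ) :
    (M.map (fun a => if c a then v else w)).sum
      = (M.countP c : ℝ) * v + ((Multiset.card M - M.countP c : ℕ) : ℝ) * w := by
  induction M using Multiset.induction_on with
  | empty => simp
  | cons a M ih =>
    simp only [Multiset.map_cons, Multiset.sum_cons, Multiset.countP_cons, Multiset.card_cons, ih]
    by_cases hc : c a
    · simp only [if_pos hc]
      have h1 : M.countP c ≤ Multiset.card M := Multiset.countP_le_card c M
      push_cast [hc, h1]
      ring
    · simp only [if_neg hc]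
      have h1 : M.countP c ≤ Multiset.card M := Multiset.countP_le_card c M
      rw [Nat.cast_sub h1, Nat.cast_sub (by omega : M.countP c + 0 ≤ Multiset.card M + 1)]
      push_cast
      ring


end RelDegAux

open RelDegAux

open Polynomial

/-- Relative degree bound for strictly p-passive SISO systems: if `G = num/den` is a
real rational transfer function such that `G(s - λ)` has exactly `p` poles in the open
right half-plane, none on the imaginary axis, and `Re G(jω - λ) ≥ 0` for all `ω`, then
the relative degree `Δ = deg den - deg num` satisfies `Δ ≤ 2p + 1`. -/
theorem relative_degree_of_p_passive
    (num den : Polynomial ℝ) (hnum : num ≠ 0) (hden : den ≠ 0)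
    (hdeg : num.natDegree ≤ den.natDegree) (hcop : IsCoprime num den)
    (lam : ℝ) (hlam : 0 ≤ lam) (p : ℕ)
    (hpoles : ((den.aroots ℂ).countP fun z => -lam < z.re) = p)
    (haxis : ∀ z ∈ den.aroots ℂ, z.re ≠ -lam)
    (hpr : ∀ ω : ℝ,
      0 ≤ ((Polynomial.aeval (Complex.I * ω - lam) num) /
            (Polynomial.aeval (Complex.I * ω - lam) den)).re) :
    den.natDegree - num.natDegree ≤ 2 * p + 1 := by
  classical
  have hsplitn : Polynomial.Splits (num.map (algebraMap ℝ ℂ)) := IsAlgClosed.splits _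
  have hsplitd : Polynomial.Splits (den.map (algebraMap ℝ ℂ)) := IsAlgClosed.splits _
  have hKcard : Multiset.card (num.aroots ℂ) = num.natDegree := by
    rw [Polynomial.aroots_def]
    rw [← hsplitn.natDegree_eq_card_roots, Polynomial.natDegree_map]
  have hWcard : Multiset.card (den.aroots ℂ) = den.natDegree := by
    rw [Polynomial.aroots_def]
    rw [← hsplitd.natDegree_eq_card_roots, Polynomial.natDegree_map]
  have hfact : ∀ (q : Polynomial ℝ), q ≠ 0 → Polynomial.Splits (q.map (algebraMap ℝ ℂ)) →
      ∀ t : ℝ, Polynomial.aeval (Complex.I * t - lam) q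
        = ((q.leadingCoeff : ℂ)) * ((q.aroots ℂ).map (fun z => Complex.I * t - lam - z)).prod := by
    intro q hq hsplit t
    have h1 : q.map (algebraMap ℝ ℂ)
        = Polynomial.C ((q.map (algebraMap ℝ ℂ)).leadingCoeff)
          * (((q.aroots ℂ)).map (fun a => Polynomial.X - Polynomial.C a)).prod := by
      rw [Polynomial.aroots_def]
      exact hsplit.eq_prod_roots
    have h2 : Polynomial.aeval (Complex.I * t - lam : ℂ) q
        = Polynomial.eval (Complex.I * t - lam : ℂ) (q.map (algebraMap ℝ ℂ)) := by
      rw [Polynomial.aeval_def, Polynomial.eval_map]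
    rw [h2, h1, Polynomial.eval_mul, Polynomial.eval_C,
      Polynomial.leadingCoeff_map (algebraMap ℝ ℂ), Polynomial.eval_multiset_prod,
      Multiset.map_map]
    simp [Complex.coe_algebraMap, Function.comp]
  -- denominator nonvanishing on the line
  have hBne : ∀ t : ℝ, Polynomial.aeval (Complex.I * t - lam : ℂ) den ≠ 0 := by
    intro t h0
    have hmem : (Complex.I * t - lam : ℂ) ∈ den.aroots ℂ := by
      rw [Polynomial.mem_aroots]
      exact ⟨hden, h0⟩
    have := haxis _ hmem
    apply this
    simp
  -- nonnegativity of Re (A * conj B)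
  have hre0 : ∀ t : ℝ, 0 ≤ (Polynomial.aeval (Complex.I * t - lam : ℂ) num
      * (starRingEnd ℂ) (Polynomial.aeval (Complex.I * t - lam : ℂ) den)).re := by
    intro t
    set A := Polynomial.aeval (Complex.I * t - lam : ℂ) num
    set B := Polynomial.aeval (Complex.I * t - lam : ℂ) den
    have h1 : A * (starRingEnd ℂ) B = (A / B) * ((Complex.normSq B : ℝ) : ℂ) := by
      rw [← Complex.mul_conj]
      rw [← mul_assoc, div_mul_cancel₀ A (hBne t)]
    rw [h1]
    have h2 : ((A / B) * ((Complex.normSq B : ℝ) : ℂ)).re = (A/B).re * Complex.normSq B := by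
      rw [mul_comm, Complex.re_ofReal_mul, mul_comm]
    rw [h2]
    exact mul_nonneg (hpr t) (Complex.normSq_nonneg B)
  -- the splitting of the numerator roots
  set K0 : Multiset ℂ := (num.aroots ℂ).filter (fun z => z.re = -lam) with hK0def
  set K1 : Multiset ℂ := (num.aroots ℂ).filter (fun z => ¬ z.re = -lam) with hK1def
  have hK01 : K0 + K1 = num.aroots ℂ := Multiset.filter_add_not _ _
  have hK1ne : ∀ z ∈ K1, z.re ≠ -lam := by
    intro z hz
    exact (Multiset.mem_filter.1 hz).2
  set M : Multiset (ℝ × ℝ × Bool) :=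
    K1.map (fun z => (-lam - z.re, -z.im, true))
    + (den.aroots ℂ).map (fun w => (-lam - w.re, -w.im, false)) with hMdef
  have hM0 : ∀ q ∈ M, q.1 ≠ 0 := by
    intro q hq
    rw [hMdef, Multiset.mem_add] at hq
    rcases hq with hq | hq
    · obtain ⟨z, hz, rfl⟩ := Multiset.mem_map.1 hq
      have := hK1ne z hz
      simpa [sub_eq_zero, eq_comm] using fun h => this (by linarith)
    · obtain ⟨w, hw, rfl⟩ := Multiset.mem_map.1 hq
      have := haxis w hw
      simpa [sub_eq_zero, eq_comm] using fun h => this (by linarith)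
  set u : ℂ := ((num.leadingCoeff * den.leadingCoeff : ℝ) : ℂ)
      * Complex.I ^ (Multiset.card K0) with hudef
  have hune : u ≠ 0 := by
    apply mul_ne_zero
    · simp only [ne_eq, Complex.ofReal_eq_zero]
      exact mul_ne_zero (Polynomial.leadingCoeff_ne_zero.2 hnum)
        (Polynomial.leadingCoeff_ne_zero.2 hden)
    · exact pow_ne_zero _ Complex.I_ne_zero
  set l : List ℝ := ((K0.map Complex.im).sort (· ≤ ·)).reverse with hldef
  have hlsorted : l.Pairwise (fun x y => y ≤ x) := by
    rw [hldef, List.pairwise_reverse]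
    exact Multiset.pairwise_sort _ _
  have hlcoe : (↑l : Multiset ℝ) = K0.map Complex.im := by
    rw [hldef, Multiset.coe_reverse, Multiset.sort_eq]
  have hllen : l.length = Multiset.card K0 := by
    have : Multiset.card (↑l : Multiset ℝ) = Multiset.card (K0.map Complex.im) := by rw [hlcoe]
    simpa [Multiset.card_map] using this
  set S : ℝ → ℝ := fun t => (l.map (fun x => t - x)).prod with hSdef
  set Θ : ℝ → ℝ := fun t => u.arg + (M.map (fun q => ang q t)).sum with hTdef
  -- the master factorization
  have hf : ∀ t : ℝ, Polynomial.aeval (Complex.I * t - lam : ℂ) num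
      * (starRingEnd ℂ) (Polynomial.aeval (Complex.I * t - lam : ℂ) den)
      = u * ((S t : ℝ) : ℂ) * (M.map (fun q => fac q t)).prod := by
    intro t
    rw [hfact num hnum hsplitn t, hfact den hden hsplitd t]
    -- conj of den product
    rw [map_mul, Complex.conj_ofReal, map_multiset_prod, Multiset.map_map]
    -- split num roots
    rw [← hK01, Multiset.map_add, Multiset.prod_add]
    -- K0 part
    have e0 : (K0.map (fun z => Complex.I * t - lam - z)).prod
        = ((S t : ℝ) : ℂ) * Complex.I ^ (Multiset.card K0) := by
      have e1 : K0.map (fun z => Complex.I * t - lam - z)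
          = K0.map (fun z => ((t - z.im : ℝ) : ℂ) * Complex.I) := by
        apply Multiset.map_congr rfl
        intro z hz
        have hzre : z.re = -lam := (Multiset.mem_filter.1 hz).2
        apply Complex.ext <;> simp [hzre]
      rw [e1, Multiset.prod_map_mul]
      congr 1
      · -- ofReal prod
        have e2 : K0.map (fun z => ((t - z.im : ℝ) : ℂ))
            = (K0.map Complex.im).map (fun y => ((t - y : ℝ) : ℂ)) := by
          rw [Multiset.map_map]; rfl
        rw [e2, ← hlcoe, Multiset.map_coe, Multiset.prod_coe]
        have e3 : List.map (fun y => ((t - y : ℝ) : ℂ)) l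
            = List.map (Complex.ofRealHom) (List.map (fun y => t - y) l) := by
          rw [List.map_map]; rfl
        rw [e3, ← map_list_prod Complex.ofRealHom]
        rfl
      · have : (fun (_ : ℂ) => Complex.I) = Function.const ℂ Complex.I := rfl
        rw [this, Multiset.map_const, Multiset.prod_replicate]
    rw [e0]
    -- K1 part
    have e4 : (K1.map (fun z => Complex.I * t - lam - z)).prod
        = ((K1.map (fun z => (-lam - z.re, -z.im, true))).map (fun q => fac q t)).prod := by
      rw [Multiset.map_map]
      apply congrArg
      apply Multiset.map_congr rfl
      intro z hz
      show Complex.I * t - lam - z = fac (-lam - z.re, -z.im, true) t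
      unfold fac
      simp only [if_pos]
      apply Complex.ext <;> simp <;> ring
    -- W part
    have e5 : ((den.aroots ℂ).map ((starRingEnd ℂ) ∘ (fun z => Complex.I * t - lam - z))).prod
        = (((den.aroots ℂ).map (fun w => (-lam - w.re, -w.im, false))).map (fun q => fac q t)).prod := by
      rw [Multiset.map_map]
      apply congrArg
      apply Multiset.map_congr rfl
      intro w hw
      show (starRingEnd ℂ) (Complex.I * t - lam - w) = fac (-lam - w.re, -w.im, false) t
      unfold fac
      simp only [Bool.false_eq_true, if_false]
      apply congrArg
      apply Complex.ext <;> simp <;> ring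
    rw [e4, e5, hMdef, Multiset.map_add, Multiset.prod_add, hudef]
    push_cast
    ring
  -- positivity of radius product
  have hRpos : ∀ t : ℝ, 0 < (M.map (fun q => rad q t)).prod := by
    intro t
    apply Multiset.prod_pos
    intro r hr
    obtain ⟨q, hq, rfl⟩ := Multiset.mem_map.1 hr
    exact sqrt_pos_aux (hM0 q hq) _
  -- sign condition
  have hsign : ∀ t : ℝ, 0 ≤ S t * Real.cos (Θ t) := by
    intro t
    have h1 := hre0 t
    rw [hf t] at h1
    rw [prod_polar M hM0 t] at h1
    have h2 : u * ((S t : ℝ) : ℂ)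
          * (((M.map (fun q => rad q t)).prod : ℝ) * Complex.exp ((((M.map (fun q => ang q t)).sum : ℝ)) * Complex.I))
        = (((‖u‖ * (M.map (fun q => rad q t)).prod : ℝ)) : ℂ)
          * (((S t : ℝ) : ℂ) * Complex.exp (((Θ t : ℝ)) * Complex.I)) := by
      conv_lhs => rw [← Complex.norm_mul_exp_arg_mul_I u]
      rw [hTdef]
      push_cast
      rw [add_mul, Complex.exp_add]
      ring
    rw [h2] at h1
    have h3 : ((((‖u‖ * (M.map (fun q => rad q t)).prod : ℝ)) : ℂ)
        * (((S t : ℝ) : ℂ) * Complex.exp (((Θ t : ℝ)) * Complex.I))).re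
        = (‖u‖ * (M.map (fun q => rad q t)).prod) * (S t * Real.cos (Θ t)) := by
      rw [Complex.re_ofReal_mul]
      congr 1
      have : ((S t : ℝ) : ℂ) * Complex.exp (((Θ t : ℝ)) * Complex.I)
          = ((S t : ℝ) : ℂ) * Complex.exp (((Θ t : ℝ)) * Complex.I) := rfl
      rw [Complex.re_ofReal_mul, Complex.exp_ofReal_mul_I_re]
    rw [h3] at h1
    have hpos : 0 < ‖u‖ * (M.map (fun q => rad q t)).prod :=
      mul_pos (norm_pos_iff.2 hune) (hRpos t)
    exact (mul_nonneg_iff_of_pos_left hpos).1 h1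
  -- continuity of the total phase
  have hTcont : Continuous Θ := by
    rw [hTdef]
    exact continuous_const.add (cont_angsum M)
  -- the limits
  set Atop : (ℝ × ℝ × Bool) → ℝ := fun q => if q.2.2 then π/2 else -(π/2) with hAtopdef
  set Abot : (ℝ × ℝ × Bool) → ℝ := fun q =>
    if q.2.2 then (if 0 < q.1 then -(π/2) else π + π/2)
    else -(if 0 < q.1 then -(π/2) else π + π/2) with hAbotdef
  have hTtop : Tendsto Θ atTop (nhds (u.arg + (M.map Atop).sum)) := by
    rw [hTdef]
    apply Tendsto.const_add
    apply tendsto_angsum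
    intro q hq
    have hq1 := hM0 q hq
    rcases q with ⟨x, c, b⟩
    cases b
    · exact (lift1_tendsto_atTop hq1 c).neg
    · exact lift1_tendsto_atTop hq1 c
  have hTbot : Tendsto Θ atBot (nhds (u.arg + (M.map Abot).sum)) := by
    rw [hTdef]
    apply Tendsto.const_add
    apply tendsto_angsum
    intro q hq
    have hq1 := hM0 q hq
    rcases q with ⟨x, c, b⟩
    cases b
    · exact (lift1_tendsto_atBot hq1 c).neg
    · exact lift1_tendsto_atBot hq1 c
  -- the winding bound
  have hmain : (u.arg + (M.map Abot).sum) - (u.arg + (M.map Atop).sum)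
      ≤ ((Multiset.card K0 : ℝ) + 1) * π := by
    cases hl' : l with
    | nil =>
      have hk0 : Multiset.card K0 = 0 := by rw [← hllen, hl']; rfl
      rw [hk0]
      have hcos : ∀ t, 0 ≤ Real.cos (Θ t) := by
        intro t
        have h1 := hsign t
        rw [hSdef] at h1
        simpa [hl'] using h1
      have := empty_bound hTcont hTbot hTtop hcos
      push_cast
      linarith
    | cons s l' =>
      have hsorted' : (s :: l').Pairwise (fun x y => y ≤ x) := by rw [← hl']; exact hlsorted
      have hchain := chain l' s hsorted' Θ hTcont _ hTbot ?_
      · have htop : Θ s - (u.arg + (M.map Atop).sum) ≤ π := by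
          apply top_bound hTcont hTtop
          intro t ht
          have h1 := hsign t
          rw [hSdef] at h1
          simp only [hl'] at h1
          have hmem : ∀ x ∈ s :: l', x ≤ s := by
            intro x hx
            rcases List.mem_cons.1 hx with rfl | hx'
            · exact le_rfl
            · exact (List.pairwise_cons.1 hsorted').1 x hx'
          have hprodpos : 0 < ((s :: l').map (fun x => t - x)).prod := by
            apply List.prod_pos
            intro a ha
            obtain ⟨x, hx, rfl⟩ := List.mem_map.1 ha
            have := hmem x hx
            linarith
          exact (mul_nonneg_iff_of_pos_left hprodpos).1 h1
        have hlen : Multiset.card K0 = l'.length + 1 := by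
          rw [← hllen, hl']; rfl
        rw [hlen]
        push_cast
        push_cast at hchain
        linarith
      · intro t ht
        have h1 := hsign t
        rw [hSdef] at h1
        simpa [hl'] using h1
  -- computing the sums
  set qm : ℕ := K1.countP (fun z => 0 < -lam - z.re) with hqmdef
  set pm : ℕ := (den.aroots ℂ).countP (fun w => 0 < -lam - w.re) with hpmdef
  have hdiffsum : (M.map Abot).sum - (M.map Atop).sum
      = ((qm : ℝ) * (-π) + ((Multiset.card K1 - qm : ℕ) : ℝ) * π)
        + ((pm : ℝ) * π + ((Multiset.card (den.aroots ℂ) - pm : ℕ) : ℝ) * (-π)) := by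
    rw [← Multiset.sum_map_sub, hMdef, Multiset.map_add, Multiset.sum_add,
      Multiset.map_map, Multiset.map_map]
    congr 1
    · have e1 : ((fun q => Abot q - Atop q) ∘ (fun z : ℂ => (-lam - z.re, -z.im, true)))
          = fun z : ℂ => if 0 < -lam - z.re then -π else π := by
        funext z
        by_cases h : 0 < -lam - z.re <;>
          simp [hAbotdef, hAtopdef, Function.comp, h] <;> ring
      rw [e1, sum_ite_count K1 (fun z => 0 < -lam - z.re) (-π) π, hqmdef]
    · have e2 : ((fun q => Abot q - Atop q) ∘ (fun w : ℂ => (-lam - w.re, -w.im, false)))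
          = fun w : ℂ => if 0 < -lam - w.re then π else -π := by
        funext w
        by_cases h : 0 < -lam - w.re <;>
          simp [hAbotdef, hAtopdef, Function.comp, h] <;> ring
      rw [e2, sum_ite_count (den.aroots ℂ) (fun w => 0 < -lam - w.re) π (-π), hpmdef]
  -- relating pm to p
  have hpmp : pm + p = Multiset.card (den.aroots ℂ) := by
    rw [hpmdef, ← hpoles]
    have e3 : (den.aroots ℂ).countP (fun z => -lam < z.re)
        = (den.aroots ℂ).countP (fun w => ¬ 0 < -lam - w.re) := by
      apply Multiset.countP_congr rfl
      intro w hw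
      have hne := haxis w hw
      have : (-lam < w.re) ↔ (¬ 0 < -lam - w.re) := by
        constructor
        · intro h hc; linarith
        · intro h
          rcases lt_or_gt_of_ne hne with h1 | h1
          · exfalso; exact h (by linarith)
          · exact h1
      exact propext this
    rw [e3]
    exact (Multiset.card_eq_countP_add_countP _ _).symm
  -- counting bounds
  have hqmle : qm ≤ Multiset.card K1 := Multiset.countP_le_card _ _
  have hpmle : pm ≤ Multiset.card (den.aroots ℂ) := Multiset.countP_le_card _ _
  have hk01card : Multiset.card K0 + Multiset.card K1 = num.natDegree := by
    rw [← hKcard, ← hK01, Multiset.card_add]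
  -- extract the integer inequality
  have hreal : (((Multiset.card K1 - qm : ℕ) : ℝ) + (pm : ℝ))
      ≤ ((Multiset.card K0 : ℝ) + 1) + (qm : ℝ)
        + ((Multiset.card (den.aroots ℂ) - pm : ℕ) : ℝ) := by
    have h1 := hmain
    rw [show (u.arg + (M.map Abot).sum) - (u.arg + (M.map Atop).sum)
        = (M.map Abot).sum - (M.map Atop).sum by ring, hdiffsum] at h1
    nlinarith [Real.pi_pos]
  have hnat : (Multiset.card K1 - qm) + pm
      ≤ (Multiset.card K0 + 1) + qm + (Multiset.card (den.aroots ℂ) - pm) := by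
    exact_mod_cast hreal
  rw [hWcard] at hpmp hpmle
  rw [hWcard] at hnat
  omega
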